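/- Let Σ be an alphabet and 𝕄 = (M,+,val,𝟘) a location-independent timed valuation monoid. Then H^Seq(Σ,𝕄) = Rec(Σ,𝕄). -/

import Mathlib

open scoped NNReal Classical

/-! # Core definitions: timed automata and weighted timed automata -/

/-- Comparison operators ⋈ ∈ {<, ≤, =, ≥, >}. -/
inductive Cmp : Type
  | lt | le | eq | ge | gt
  deriving DecidableEq

/-- Evaluation of a comparison `r ⋈ c` for `r ∈ ℝ≥0` and `c ∈ ℕ`. -/
def Cmp.eval : Cmp → ℝ≥0 → ℕ → Prop
  | .lt, r, c => r < (c : ℝ≥0)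
  | .le, r, c => r ≤ (c : ℝ≥0)
  | .eq, r, c => r = (c : ℝ≥0)
  | .ge, r, c => (c : ℝ≥0) ≤ r
  | .gt, r, c => (c : ℝ≥0) < r

/-- Clock constraints over a set `C` of clocks: `True` or conjunctions of `x ⋈ c`. -/
inductive ClockConstraint (C : Type) : Type
  | tt : ClockConstraint C
  | atom : C → Cmp → ℕ → ClockConstraint C
  | conj : ClockConstraint C → ClockConstraint C → ClockConstraint C

/-- A clock valuation assigns a non-negative real to each clock. -/
def ClockVal (C : Type) : Type := C → ℝ≥0

/-- Satisfaction of clock constraints. -/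
def ClockConstraint.Sat {C : Type} (ν : ClockVal C) : ClockConstraint C → Prop
  | .tt => True
  | .atom x op c => op.eval (ν x) c
  | .conj φ ψ => φ.Sat ν ∧ ψ.Sat ν

/-- `ν + t`: add `t` to every clock. -/
def ClockVal.add {C : Type} (ν : ClockVal C) (t : ℝ≥0) : ClockVal C := fun x => ν x + t

/-- `ν[Λ := 0]`: reset the clocks in `Λ` to `0`. -/
noncomputable def ClockVal.reset {C : Type} (ν : ClockVal C) (Λ : Set C) : ClockVal C :=
  fun x => if x ∈ Λ then 0 else ν x

/-- The clock valuation assigning `0` to every clock. -/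
def ClockVal.zero {C : Type} : ClockVal C := fun _ => 0

/-- An edge of a timed automaton: an element of `L × Σ × Φ(C) × 2^C × L`. -/
structure Edge (L A C : Type) : Type where
  src : L
  label : A
  guard : ClockConstraint C
  reset : Set C
  dst : L

/-- A timed automaton over the alphabet `A`. -/
structure TimedAutomaton (A : Type) : Type 1 where
  L : Type
  C : Type
  finL : Finite L
  finC : Finite C
  I : Set L
  F : Set L
  E : Set (Edge L A C)
  finE : E.Finite

/-- A (non-empty finite) timed word over `A`. -/
abbrev TimedWord (A : Type) : Type := { w : List (A × ℝ≥0) // w ≠ [] }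

/-- `T.IsRunFrom ℓ ν w es` holds iff `es` is the sequence of edges of a run of `T`
reading the timed word `w`, starting in location `ℓ` with clock valuation `ν`,
and ending in a final location. -/
def TimedAutomaton.IsRunFrom {A : Type} (T : TimedAutomaton A) :
    T.L → ClockVal T.C → List (A × ℝ≥0) → List (Edge T.L A T.C) → Prop
  | ℓ, _, [], [] => ℓ ∈ T.F
  | ℓ, ν, (a, t) :: w, e :: es =>
      e ∈ T.E ∧ e.src = ℓ ∧ e.label = a ∧ e.guard.Sat (ν.add t) ∧
      T.IsRunFrom e.dst ((ν.add t).reset e.reset) w es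
  | _, _, [], _ :: _ => False
  | _, _, _ :: _, [] => False

/-- `Run_T(w)`: the set of runs (identified with their edge sequences) of `T` on `w`. -/
def TimedAutomaton.RunOn {A : Type} (T : TimedAutomaton A) (w : TimedWord A) :
    Set (List (Edge T.L A T.C)) :=
  { es | ∃ ℓ₀ ∈ T.I, T.IsRunFrom ℓ₀ ClockVal.zero w.1 es }

/-- `L(T)`: the timed language accepted by `T`. -/
def TimedAutomaton.Lang {A : Type} (T : TimedAutomaton A) : Set (TimedWord A) :=
  { w | (T.RunOn w).Nonempty }

/-- A timed automaton is unambiguous if every timed word has at most one run. -/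
def TimedAutomaton.Unambiguous {A : Type} (T : TimedAutomaton A) : Prop :=
  ∀ w : TimedWord A, (T.RunOn w).Subsingleton

/-- A timed automaton is deterministic if it has a single initial location and the guards of
any two distinct edges with the same source and label are jointly unsatisfiable. -/
def TimedAutomaton.Deterministic {A : Type} (T : TimedAutomaton A) : Prop :=
  (∃ ℓ, T.I = {ℓ}) ∧
  ∀ e₁ ∈ T.E, ∀ e₂ ∈ T.E, e₁.src = e₂.src → e₁.label = e₂.label → e₁ ≠ e₂ →
    ∀ ν : ClockVal T.C, ¬ (e₁.guard.Sat ν ∧ e₂.guard.Sat ν)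

/-- A timed automaton is sequential if it has a single initial location and any two edges
with the same source and label are equal. -/
def TimedAutomaton.Sequential {A : Type} (T : TimedAutomaton A) : Prop :=
  (∃ ℓ, T.I = {ℓ}) ∧
  ∀ e₁ ∈ T.E, ∀ e₂ ∈ T.E, e₁.src = e₂.src → e₁.label = e₂.label → e₁ = e₂

/-- A timed language is recognizable by a timed automaton satisfying `P`. -/
def TLRecognizableBy {A : Type} (P : TimedAutomaton A → Prop) (𝓛 : Set (TimedWord A)) : Prop :=
  ∃ T : TimedAutomaton A, P T ∧ T.Lang = 𝓛

/-- A weighted timed automaton over the alphabet `A` and (the domain `M` of) a timed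
valuation monoid: a timed automaton together with weights on locations and edges.
The timed valuation monoid itself is given by an `AddCommMonoid M` instance together with a
timed valuation function `val : List ((M × M) × ℝ≥0) → M` (only its values on non-empty
lists, i.e. on `𝕋(M×M)⁺`, ever matter). -/
structure WTA (A M : Type) extends TimedAutomaton A where
  wtL : L → M
  wtE : Edge L A C → M

/-- The timed word `wt♯(ρ) ∈ 𝕋(M×M)⁺` associated with a run: the `i`-th letter is
`((wt(ℓ_{i-1}), wt(e_i)), t_i)`, where `ℓ_{i-1}` is the source location of edge `e_i`. -/
def WTA.runWord {A M : Type} (W : WTA A M) (w : List (A × ℝ≥0))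
    (es : List (Edge W.L A W.C)) : List ((M × M) × ℝ≥0) :=
  List.zipWith (fun (p : A × ℝ≥0) e => ((W.wtL e.src, W.wtE e), p.2)) w es

/-- The behavior `‖W‖ : 𝕋A⁺ → M` of a WTA: `‖W‖(w) = Σ (val(wt♯(ρ)) : ρ ∈ Run_W(w))`,
the empty sum being `0` (the monoid unit `𝟘`). -/
noncomputable def WTA.behavior {A M : Type} [AddCommMonoid M]
    (val : List ((M × M) × ℝ≥0) → M) (W : WTA A M) (w : TimedWord A) : M :=
  ∑ᶠ es ∈ W.toTimedAutomaton.RunOn w, val (W.runWord w.1 es)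

/-- A quantitative timed language `r : 𝕋A⁺ → M` is recognizable over the timed valuation
monoid `(M, +, val, 𝟘)` by a WTA whose underlying timed automaton satisfies `P`. -/
def QTLRecognizableBy {A M : Type} [AddCommMonoid M] (val : List ((M × M) × ℝ≥0) → M)
    (P : TimedAutomaton A → Prop) (r : TimedWord A → M) : Prop :=
  ∃ W : WTA A M, P W.toTimedAutomaton ∧ ∀ w, W.behavior val w = r w

/-- Recognizability (no restriction on the underlying timed automaton). -/
def QTLRecognizable {A M : Type} [AddCommMonoid M] (val : List ((M × M) × ℝ≥0) → M)
    (r : TimedWord A → M) : Prop :=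
  ∃ W : WTA A M, ∀ w, W.behavior val w = r w

/-- Renaming of timed words along `h : Γ → A`. -/
def mapTimedWord {Γ A : Type} (h : Γ → A) (v : TimedWord Γ) : TimedWord A :=
  ⟨v.1.map (fun p => (h p.1, p.2)), by
    cases v with
    | mk l hl => cases l with
      | nil => exact absurd rfl hl
      | cons p l => simp⟩

/-- `h(r)(w) = Σ (r(v) : v ∈ 𝕋Γ⁺, h(v) = w)` (a finite sum when `Γ` is finite). -/
noncomputable def pushQTL {Γ A M : Type} [AddCommMonoid M] (h : Γ → A)
    (r : TimedWord Γ → M) (w : TimedWord A) : M :=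
  ∑ᶠ v ∈ { v : TimedWord Γ | mapTimedWord h v = w }, r v

/-- `(val ∘ g)(w) = val((g(a₁),t₁)…(g(aₙ),tₙ))`. -/
def valComp {A M : Type} (val : List ((M × M) × ℝ≥0) → M) (g : A → M × M)
    (w : TimedWord A) : M :=
  val (w.1.map (fun p => (g p.1, p.2)))

/-- The intersection `r ∩ 𝓛` of a quantitative timed language with a timed language. -/
noncomputable def interQTL {A M : Type} [Zero M] (r : TimedWord A → M)
    (𝓛 : Set (TimedWord A)) (w : TimedWord A) : M :=
  if w ∈ 𝓛 then r w else 0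

/-- Membership in the Nivat class `N^P(A, 𝕄)`: `𝕃 = h((val ∘ g) ∩ 𝓛)` for some alphabet `Γ`,
maps `h : Γ → A`, `g : Γ → M × M` and a timed language `𝓛` recognizable by a timed
automaton satisfying `P`. -/
def NivatMem {A M : Type} [AddCommMonoid M] (val : List ((M × M) × ℝ≥0) → M)
    (P : ∀ {Γ : Type}, TimedAutomaton Γ → Prop) (𝕃 : TimedWord A → M) : Prop :=
  ∃ (Γ : Type) (_ : Finite Γ) (_ : Nonempty Γ) (h : Γ → A) (g : Γ → M × M)
    (𝓛 : Set (TimedWord Γ)),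
      TLRecognizableBy P 𝓛 ∧ ∀ w, 𝕃 w = pushQTL h (interQTL (valComp val g) 𝓛) w

/-- Membership in the class `H^P(A, 𝕄)`: `𝕃 = h(r)` for some alphabet `Γ`, `h : Γ → A`
and a quantitative timed language `r` recognizable by a WTA whose underlying timed
automaton satisfies `P`. -/
def HMem {A M : Type} [AddCommMonoid M] (val : List ((M × M) × ℝ≥0) → M)
    (P : ∀ {Γ : Type}, TimedAutomaton Γ → Prop) (𝕃 : TimedWord A → M) : Prop :=
  ∃ (Γ : Type) (_ : Finite Γ) (_ : Nonempty Γ) (h : Γ → A) (r : TimedWord Γ → M),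
      QTLRecognizableBy val (fun T => P T) r ∧ ∀ w, 𝕃 w = pushQTL h r w

/-- Idempotency of a timed valuation monoid. -/
def IsIdempotent (M : Type) [Add M] : Prop := ∀ m : M, m + m = m

/-- Location-independence of a timed valuation function: the value of `val` on a non-empty
timed word over `M × M` depends only on the second components and the time stamps. -/
def LocIndep {M : Type} (val : List ((M × M) × ℝ≥0) → M) : Prop :=
  ∀ l l' : List ((M × M) × ℝ≥0), l ≠ [] →
    l.map (fun p => (p.1.2, p.2)) = l'.map (fun p => (p.1.2, p.2)) → val l = val l'


section Helpers
open Set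

lemma finite_lists {β : Type} {s : Set β} (hs : s.Finite) (n : ℕ) :
    {l : List β | l.length = n ∧ ∀ x ∈ l, x ∈ s}.Finite := by
  induction n with
  | zero =>
      apply Set.Finite.subset (Set.finite_singleton ([] : List β))
      rintro l ⟨hl, -⟩
      simp [List.length_eq_zero_iff.mp hl]
  | succ n ih =>
      apply Set.Finite.subset (Set.Finite.image2 (fun x l => x :: l) hs ih)
      rintro l ⟨hl, hmem⟩
      cases l with
      | nil => simp at hl
      | cons x t =>
          exact Set.mem_image2_of_mem (hmem x (by simp))
            ⟨by simpa using hl, fun y hy => hmem y (by simp [hy])⟩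

lemma run_spec {A : Type} (T : TimedAutomaton A) :
    ∀ (w : List (A × ℝ≥0)) (es : List (Edge T.L A T.C)) (ℓ : T.L) (ν : ClockVal T.C),
      T.IsRunFrom ℓ ν w es → es.length = w.length ∧ ∀ e ∈ es, e ∈ T.E := by
  intro w
  induction w with
  | nil =>
      rintro (_ | ⟨e, es⟩) ℓ ν h
      · exact ⟨rfl, by simp⟩
      · exact absurd h (by simp [TimedAutomaton.IsRunFrom])
  | cons p w ih =>
      obtain ⟨a, t⟩ := p
      rintro (_ | ⟨e, es⟩) ℓ ν h
      · exact absurd h (by simp [TimedAutomaton.IsRunFrom])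
      · obtain ⟨hE, -, -, -, hrest⟩ := h
        obtain ⟨h1, h2⟩ := ih es e.dst _ hrest
        refine ⟨by simp [h1], ?_⟩
        intro e' he'
        rcases List.mem_cons.mp he' with rfl | he'
        · exact hE
        · exact h2 e' he'

lemma runOn_finite {A : Type} (T : TimedAutomaton A) (w : TimedWord A) :
    (T.RunOn w).Finite := by
  apply Set.Finite.subset (finite_lists T.finE w.1.length)
  rintro es ⟨ℓ₀, -, hrun⟩
  exact run_spec T w.1 es ℓ₀ _ hrun

lemma fiber_finite {Γ A : Type} [Finite Γ] (h : Γ → A) (w : TimedWord A) :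
    {v : TimedWord Γ | mapTimedWord h v = w}.Finite := by
  have h0 : {l : List (Γ × ℝ≥0) | l.length = w.1.length ∧
      ∀ x ∈ l, x ∈ (Set.univ : Set Γ) ×ˢ {t | t ∈ w.1.map Prod.snd}}.Finite :=
    finite_lists (Set.Finite.prod Set.finite_univ (List.finite_toSet _)) _
  apply Set.Finite.subset
    (Set.Finite.preimage (Set.injOn_of_injective Subtype.val_injective) h0)
  intro v hv
  have hv1 : v.1.map (fun p => (h p.1, p.2)) = w.1 := congrArg Subtype.val hv
  constructor
  · simpa using congrArg List.length hv1
  · intro x hx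
    refine ⟨trivial, ?_⟩
    have : (h x.1, x.2) ∈ w.1 := hv1 ▸ List.mem_map_of_mem (f := fun p => (h p.1, p.2)) hx
    simpa using List.mem_map_of_mem (f := Prod.snd) this

lemma sum_push {Γ A M : Type} [AddCommMonoid M] [Finite Γ] (h : Γ → A) (w : TimedWord A)
    {α β : Type} (s : Set α) (T : TimedWord Γ → Set β)
    (hs : s.Finite) (hT : ∀ v, (T v).Finite)
    (Φ : α → TimedWord Γ × β)
    (hbij : Set.BijOn Φ s {p : TimedWord Γ × β | mapTimedWord h p.1 = w ∧ p.2 ∈ T p.1})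
    (F : α → M) (G : TimedWord Γ → β → M)
    (hFG : ∀ x ∈ s, F x = G (Φ x).1 (Φ x).2) :
    ∑ᶠ x ∈ s, F x = ∑ᶠ v ∈ {v : TimedWord Γ | mapTimedWord h v = w}, ∑ᶠ y ∈ T v, G v y := by
  have h1 : ∑ᶠ x ∈ s, F x
      = ∑ᶠ p ∈ {p : TimedWord Γ × β | mapTimedWord h p.1 = w ∧ p.2 ∈ T p.1},
          G p.1 p.2 :=
    finsum_mem_eq_of_bijOn Φ hbij hFG
  have hP : {p : TimedWord Γ × β | mapTimedWord h p.1 = w ∧ p.2 ∈ T p.1}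
      = ⋃ v ∈ {v : TimedWord Γ | mapTimedWord h v = w}, (fun y => (v, y)) '' T v := by
    ext p
    constructor
    · rintro ⟨h1, h2⟩
      exact Set.mem_biUnion h1 ⟨p.2, h2, rfl⟩
    · intro hp
      simp only [Set.mem_iUnion] at hp
      obtain ⟨v, hv, y, hy, rfl⟩ := hp
      exact ⟨hv, hy⟩
  rw [h1, hP, finsum_mem_biUnion ?_ (fiber_finite h w) ?_]
  · apply finsum_mem_congr rfl
    intro v hv
    exact (finsum_mem_eq_of_bijOn (fun y => (v, y))
      ((Set.injOn_of_injective (fun y₁ y₂ hy => by simpa using hy)).bijOn_image)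
      (fun y _ => rfl)).symm
  · intro v₁ h₁ v₂ h₂ hne
    apply Set.disjoint_left.mpr
    rintro p ⟨y, hy, rfl⟩ ⟨y', hy', hp'⟩
    exact hne (congrArg Prod.fst hp').symm
  · exact fun v _ => (hT v).image _

instance optFinite (α : Type*) [Finite α] : Finite (Option α) :=
  Finite.of_equiv (α ⊕ (PUnit : Type)) (Equiv.optionEquivSumPUnit α).symm

end Helpers

namespace Dir2
open Set

variable {S M : Type}

/-- New alphabet: edges of `W` plus a junk letter. -/
def gamma (W : WTA S M) : Type := Option {e : Edge W.L S W.C // e ∈ W.E}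

instance (W : WTA S M) : Finite (gamma W) := by
  have := W.finE.to_subtype
  unfold gamma
  infer_instance

instance (W : WTA S M) : Nonempty (gamma W) := ⟨none⟩

noncomputable def γof (W : WTA S M) (e : Edge W.L S W.C) : gamma W :=
  if he : e ∈ W.E then some ⟨e, he⟩ else none

noncomputable def hmap (W : WTA S M) [Nonempty S] : gamma W → S := fun o =>
  match o with
  | some eb => eb.1.label
  | none => Classical.arbitrary S

noncomputable def inner (W : WTA S M) (e : Edge W.L S W.C) :
    Edge (Option W.L) (gamma W) W.C :=
  ⟨some e.src, γof W e, e.guard, e.reset, some e.dst⟩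

noncomputable def first (W : WTA S M) (e : Edge W.L S W.C) :
    Edge (Option W.L) (gamma W) W.C :=
  ⟨none, γof W e, e.guard, e.reset, some e.dst⟩

noncomputable def seqWTA [Nonempty S] [AddCommMonoid M] (W : WTA S M) : WTA (gamma W) M where
  L := Option W.L
  C := W.C
  finL := by have := W.finL; infer_instance
  finC := W.finC
  I := {none}
  F := some '' W.F
  E := ((fun eb : {e // e ∈ W.E} => inner W eb.1) '' Set.univ)
    ∪ ((fun eb : {e // e ∈ W.E} => first W eb.1) '' {eb | eb.1.src ∈ W.I})
  finE := by
    have := W.finE.to_subtype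
    exact ((Set.toFinite _).image _).union ((Set.toFinite _).image _)
  wtL := fun _ => 0
  wtE := fun e' =>
    match e'.label with
    | some eb => W.wtE eb.1
    | none => 0

variable [Nonempty S] [AddCommMonoid M]

lemma γof_eq (W : WTA S M) {e : Edge W.L S W.C} (he : e ∈ W.E) (p : e ∈ W.E) :
    γof W e = some ⟨e, p⟩ := dif_pos he

lemma seq (W : WTA S M) : (seqWTA W).toTimedAutomaton.Sequential := by
  refine ⟨⟨none, rfl⟩, ?_⟩
  rintro e₁ h₁ e₂ h₂ hsrc hlab
  have key : ∀ e : Edge (Option W.L) (gamma W) W.C,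
      e ∈ (seqWTA W).E → ∃ eb : {e // e ∈ W.E},
        e.label = some eb ∧ (e = inner W eb.1 ∨ e = first W eb.1) := by
    rintro e (⟨eb, -, rfl⟩ | ⟨eb, -, rfl⟩)
    · exact ⟨eb, γof_eq W eb.2 eb.2, Or.inl rfl⟩
    · exact ⟨eb, γof_eq W eb.2 eb.2, Or.inr rfl⟩
  obtain ⟨eb₁, hl₁, hc₁⟩ := key e₁ h₁
  obtain ⟨eb₂, hl₂, hc₂⟩ := key e₂ h₂
  have : eb₁ = eb₂ := by
    apply Option.some_injective
    rw [← hl₁, ← hl₂, hlab]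
  subst this
  rcases hc₁ with rfl | rfl <;> rcases hc₂ with rfl | rfl
  · rfl
  · simp [inner, first] at hsrc
  · simp [inner, first] at hsrc
  · rfl

end Dir2

namespace Dir2
open Set

variable {S M : Type} [Nonempty S] [AddCommMonoid M]

noncomputable def vword (W : WTA S M) (w : List (S × ℝ≥0))
    (es : List (Edge W.L S W.C)) : List (gamma W × ℝ≥0) :=
  List.zipWith (fun p e => (γof W e, p.2)) w es

noncomputable def lift (W : WTA S M) :
    List (Edge W.L S W.C) → List (Edge (Option W.L) (gamma W) W.C)
  | [] => []
  | e :: r => first W e :: r.map (inner W)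

lemma wtE_inner (W : WTA S M) {e : Edge W.L S W.C} (he : e ∈ W.E) :
    (seqWTA W).wtE (inner W e) = W.wtE e := by
  simp [seqWTA, inner, γof_eq W he he]

lemma wtE_first (W : WTA S M) {e : Edge W.L S W.C} (he : e ∈ W.E) :
    (seqWTA W).wtE (first W e) = W.wtE e := by
  simp [seqWTA, first, γof_eq W he he]

lemma run_to (W : WTA S M) :
    ∀ (w : List (S × ℝ≥0)) (es : List (Edge W.L S W.C)) (ℓ : W.L) (ν : ClockVal W.C),
      W.toTimedAutomaton.IsRunFrom ℓ ν w es →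
      (seqWTA W).toTimedAutomaton.IsRunFrom (some ℓ) ν (vword W w es) (es.map (inner W)) ∧
      (vword W w es).map (fun p => (hmap W p.1, p.2)) = w := by
  intro w
  induction w with
  | nil =>
      rintro (_ | ⟨e, es⟩) ℓ ν h
      · refine ⟨?_, rfl⟩
        simp only [TimedAutomaton.IsRunFrom] at h ⊢
        exact ⟨ℓ, h, rfl⟩
      · exact absurd h (by simp [TimedAutomaton.IsRunFrom])
  | cons p w ih =>
      obtain ⟨a, t⟩ := p
      rintro (_ | ⟨e, es⟩) ℓ ν h
      · exact absurd h (by simp [TimedAutomaton.IsRunFrom])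
      · obtain ⟨hE, hsrc, hlab, hg, hrest⟩ := h
        obtain ⟨ih1, ih2⟩ := ih es e.dst _ hrest
        constructor
        · exact ⟨Set.mem_union_left _ ⟨⟨e, hE⟩, trivial, rfl⟩,
            congrArg some hsrc, rfl, hg, ih1⟩
        · have hγ : γof W e = some ⟨e, hE⟩ := γof_eq W hE hE
          simp only [vword, List.zipWith_cons_cons, List.map_cons]
          refine congrArg₂ _ ?_ ih2
          simp [hγ, hmap, hlab]

lemma run_from (W : WTA S M) :
    ∀ (es' : List (Edge (Option W.L) (gamma W) W.C)) (vl : List (gamma W × ℝ≥0))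
      (ℓ : W.L) (ν : ClockVal W.C),
      (seqWTA W).toTimedAutomaton.IsRunFrom (some ℓ) ν vl es' →
      ∃ es, es.map (inner W) = es' ∧
        vword W (vl.map (fun p => (hmap W p.1, p.2))) es = vl ∧
        W.toTimedAutomaton.IsRunFrom ℓ ν (vl.map (fun p => (hmap W p.1, p.2))) es := by
  intro es'
  induction es' with
  | nil =>
      rintro (_ | ⟨q, vl⟩) ℓ ν h
      · refine ⟨[], rfl, rfl, ?_⟩
        simp only [TimedAutomaton.IsRunFrom] at h ⊢
        obtain ⟨x, hx, hxe⟩ := h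
        cases Option.some_injective _ hxe
        exact hx
      · exact absurd h (by simp [TimedAutomaton.IsRunFrom])
  | cons e' es' ih =>
      rintro (_ | ⟨⟨γ, t⟩, vl⟩) ℓ ν h
      · exact absurd h (by simp [TimedAutomaton.IsRunFrom])
      · obtain ⟨hE, hsrc, hlab, hg, hrest⟩ := h
        rcases hE with ⟨eb, -, rfl⟩ | ⟨eb, hIb, rfl⟩
        · have hsrc' : eb.1.src = ℓ := Option.some_injective _ hsrc
          obtain ⟨es, h1, h2, h3⟩ := ih vl eb.1.dst _ hrest
          have hγ : γof W eb.1 = γ := hlab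
          refine ⟨eb.1 :: es, by simp [h1], ?_, ?_⟩
          · simp only [List.map_cons, vword, List.zipWith_cons_cons]
            refine congrArg₂ _ (by rw [hγ]) h2
          · refine ⟨eb.2, hsrc', ?_, hg, h3⟩
            rw [← hγ, γof_eq W eb.2 eb.2]
            rfl
        · exact absurd hsrc (by simp [first])

lemma vword_inj (W : WTA S M) :
    ∀ (w : List (S × ℝ≥0)) (es₁ es₂ : List (Edge W.L S W.C)),
      (∀ e ∈ es₁, e ∈ W.E) → (∀ e ∈ es₂, e ∈ W.E) →
      es₁.length = w.length → es₂.length = w.length →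
      vword W w es₁ = vword W w es₂ → es₁ = es₂ := by
  intro w
  induction w with
  | nil =>
      intro es₁ es₂ _ _ h1 h2 _
      rw [List.length_eq_zero_iff.mp h1, List.length_eq_zero_iff.mp h2]
  | cons p w ih =>
      rintro (_ | ⟨e₁, es₁⟩) (_ | ⟨e₂, es₂⟩) hm₁ hm₂ h1 h2 hv
      · rfl
      · simp at h1
      · simp at h2
      · simp only [List.length_cons] at h1 h2
        simp only [vword, List.zipWith_cons_cons, List.cons.injEq, Prod.mk.injEq] at hv
        obtain ⟨⟨hγ, -⟩, htail⟩ := hv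
        have he : e₁ = e₂ := by
          rw [γof_eq W (hm₁ e₁ (by simp)) (hm₁ e₁ (by simp)),
            γof_eq W (hm₂ e₂ (by simp)) (hm₂ e₂ (by simp))] at hγ
          exact congrArg Subtype.val (Option.some_injective _ hγ)
        subst he
        rw [ih es₁ es₂ (fun e he => hm₁ e (by simp [he])) (fun e he => hm₂ e (by simp [he]))
          (by omega) (by omega) htail]

lemma runword_inner (W : WTA S M) :
    ∀ (w : List (S × ℝ≥0)) (es : List (Edge W.L S W.C)), (∀ e ∈ es, e ∈ W.E) →
      ((seqWTA W).runWord (vword W w es) (es.map (inner W))).map (fun p => (p.1.2, p.2)) =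
      (W.runWord w es).map (fun p => (p.1.2, p.2)) := by
  intro w
  induction w with
  | nil => intro es _; rfl
  | cons p w ih =>
      rintro (_ | ⟨e, es⟩) hm
      · rfl
      · simp only [vword, List.zipWith_cons_cons, List.map_cons, WTA.runWord]
        refine congrArg₂ _ ?_ (ih es (fun e he => hm e (by simp [he])))
        simp [wtE_inner W (hm e (by simp))]

lemma runword_lift (W : WTA S M) :
    ∀ (w : List (S × ℝ≥0)) (es : List (Edge W.L S W.C)), (∀ e ∈ es, e ∈ W.E) →
      ((seqWTA W).runWord (vword W w es) (lift W es)).map (fun p => (p.1.2, p.2)) =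
      (W.runWord w es).map (fun p => (p.1.2, p.2)) := by
  rintro (_ | ⟨p, w⟩) (_ | ⟨e, es⟩) hm
  · rfl
  · rfl
  · rfl
  · simp only [vword, List.zipWith_cons_cons, List.map_cons, WTA.runWord, lift]
    refine congrArg₂ _ (by simp [wtE_first W (hm e (by simp))]) (runword_inner W w es (fun e he => hm e (by simp [he])))
end Dir2

namespace Dir2
open Set

variable {S M : Type} [Nonempty S] [AddCommMonoid M]

lemma run_to_full (W : WTA S M) :
    ∀ (w : List (S × ℝ≥0)) (es : List (Edge W.L S W.C)) (ℓ₀ : W.L) (ν : ClockVal W.C),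
      w ≠ [] → W.toTimedAutomaton.IsRunFrom ℓ₀ ν w es → ℓ₀ ∈ W.I →
      (seqWTA W).toTimedAutomaton.IsRunFrom none ν (vword W w es) (lift W es) := by
  rintro (_ | ⟨⟨a, t⟩, w⟩) (_ | ⟨e, es⟩) ℓ₀ ν hne hrun hI
  · exact absurd rfl hne
  · exact absurd rfl hne
  · exact absurd hrun (by simp [TimedAutomaton.IsRunFrom])
  · obtain ⟨hE, hsrc, hlab, hg, hrest⟩ := hrun
    refine ⟨?_, rfl, rfl, hg, (run_to W w es e.dst _ hrest).1⟩
    exact Set.mem_union_right _ ⟨⟨e, hE⟩, by show e.src ∈ W.I; rw [hsrc]; exact hI, rfl⟩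

lemma run_from_full (W : WTA S M) :
    ∀ (vl : List (gamma W × ℝ≥0)) (es' : List (Edge (Option W.L) (gamma W) W.C))
      (ν : ClockVal W.C), vl ≠ [] →
      (seqWTA W).toTimedAutomaton.IsRunFrom none ν vl es' →
      ∃ es ℓ₀, ℓ₀ ∈ W.I ∧ lift W es = es' ∧
        vword W (vl.map (fun p => (hmap W p.1, p.2))) es = vl ∧
        W.toTimedAutomaton.IsRunFrom ℓ₀ ν (vl.map (fun p => (hmap W p.1, p.2))) es := by
  rintro (_ | ⟨⟨γ, t⟩, vl⟩) (_ | ⟨e', es'⟩) ν hne h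
  · exact absurd rfl hne
  · exact absurd rfl hne
  · exact absurd h (by simp [TimedAutomaton.IsRunFrom])
  · obtain ⟨hE, hsrc, hlab, hg, hrest⟩ := h
    rcases hE with ⟨eb, -, rfl⟩ | ⟨eb, hIb, rfl⟩
    · exact absurd hsrc (by simp [inner])
    · obtain ⟨es, h1, h2, h3⟩ := run_from W es' vl eb.1.dst _ hrest
      have hγ : γof W eb.1 = γ := hlab
      refine ⟨eb.1 :: es, eb.1.src, hIb, ?_, ?_, ?_⟩
      · simp [lift, h1]
      · simp only [List.map_cons, vword, List.zipWith_cons_cons]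
        exact congrArg₂ _ (by rw [hγ]) h2
      · refine ⟨eb.2, rfl, ?_, hg, h3⟩
        rw [← hγ, γof_eq W eb.2 eb.2]
        rfl

lemma dir2 {S M : Type} [Finite S] [Nonempty S] [AddCommMonoid M]
    (val : List ((M × M) × ℝ≥0) → M) (hli : LocIndep val) (𝕃 : TimedWord S → M)
    (hrec : QTLRecognizable val 𝕃) : HMem val (fun {_} T => T.Sequential) 𝕃 := by
  obtain ⟨W, hW⟩ := hrec
  refine ⟨gamma W, inferInstance, inferInstance, hmap W, (seqWTA W).behavior val,
    ⟨seqWTA W, seq W, fun _ => rfl⟩, fun w => ?_⟩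
  rw [← hW w]
  show W.behavior val w = pushQTL (hmap W) ((seqWTA W).behavior val) w
  set Φ : List (Edge W.L S W.C) →
      TimedWord (gamma W) × List (Edge (Option W.L) (gamma W) W.C) :=
    fun es => if hv : vword W w.1 es = [] then (⟨[(none, 0)], by simp⟩, [])
      else (⟨vword W w.1 es, hv⟩, lift W es) with hΦ
  have hvne : ∀ es ∈ W.toTimedAutomaton.RunOn w, vword W w.1 es ≠ [] := by
    rintro es ⟨ℓ₀, hI, hrun⟩ hcon
    have hlen := (run_spec _ _ _ _ _ hrun).1
    have h2 : (List.zipWith (fun (p : S × ℝ≥0) e => (γof W e, p.2)) w.1 es).length = 0 :=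
      congrArg List.length hcon
    rw [List.length_zipWith, ← hlen, min_self] at h2
    rw [hlen] at h2
    exact w.2 (List.length_eq_zero_iff.mp h2)
  have key := sum_push (hmap W) w (W.toTimedAutomaton.RunOn w)
      (fun v => (seqWTA W).toTimedAutomaton.RunOn v) (runOn_finite _ w)
      (fun v => runOn_finite _ v) Φ
      ?_ (fun es => val (W.runWord w.1 es)) (fun v y => val ((seqWTA W).runWord v.1 y)) ?_
  · exact key
  · -- BijOn
    refine ⟨?_, ?_, ?_⟩
    · -- MapsTo
      rintro es ⟨ℓ₀, hI, hrun⟩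
      have hv := hvne es ⟨ℓ₀, hI, hrun⟩
      simp only [hΦ, dif_neg hv]
      refine ⟨Subtype.ext ?_, ?_⟩
      · exact (run_to W w.1 es ℓ₀ _ hrun).2
      · exact ⟨none, rfl, run_to_full W w.1 es ℓ₀ _ w.2 hrun hI⟩
    · -- InjOn
      intro es₁ h₁ es₂ h₂ heq
      simp only [hΦ, dif_neg (hvne es₁ h₁), dif_neg (hvne es₂ h₂)] at heq
      have hv : vword W w.1 es₁ = vword W w.1 es₂ :=
        congrArg Subtype.val (congrArg Prod.fst heq)
      obtain ⟨ℓ₁, -, hrun₁⟩ := h₁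
      obtain ⟨ℓ₂, -, hrun₂⟩ := h₂
      exact vword_inj W w.1 es₁ es₂ (run_spec _ _ _ _ _ hrun₁).2 (run_spec _ _ _ _ _ hrun₂).2
        (run_spec _ _ _ _ _ hrun₁).1 (run_spec _ _ _ _ _ hrun₂).1 hv
    · -- SurjOn
      rintro ⟨v, es'⟩ ⟨hv, hes'⟩
      obtain ⟨ℓ', hℓ', hrun'⟩ := hes'
      have hℓn : ℓ' = none := hℓ'
      subst hℓn
      obtain ⟨es, ℓ₀, hI, hlift, hvw, hrun⟩ := run_from_full W v.1 es' _ v.2 hrun'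
      have hv1 : v.1.map (fun p => (hmap W p.1, p.2)) = w.1 := congrArg Subtype.val hv
      rw [hv1] at hvw hrun
      refine ⟨es, ⟨ℓ₀, hI, hrun⟩, ?_⟩
      simp only [hΦ, dif_neg (hvw ▸ v.2)]
      exact Prod.ext (Subtype.ext hvw) hlift
  · -- hFG
    rintro es ⟨ℓ₀, hI, hrun⟩
    have hv := hvne es ⟨ℓ₀, hI, hrun⟩
    simp only [hΦ, dif_neg hv]
    have hlen := (run_spec _ _ _ _ _ hrun).1
    have hrne : W.runWord w.1 es ≠ [] := by
      intro hc
      have h2 := congrArg List.length hc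
      rw [WTA.runWord, List.length_zipWith, ← hlen, min_self] at h2
      rw [hlen] at h2
      exact w.2 (List.length_eq_zero_iff.mp h2)
    exact hli _ _ hrne (runword_lift W w.1 es (run_spec _ _ _ _ _ hrun).2).symm

end Dir2

namespace Dir1
open Set

variable {S Γ M : Type} [Nonempty Γ] [AddCommMonoid M]

def enc (W : WTA Γ M) (h : Γ → S) (o : Option Γ) (e : Edge W.L Γ W.C) :
    Edge (W.L × Option Γ) S W.C :=
  ⟨(e.src, o), h e.label, e.guard, e.reset, (e.dst, some e.label)⟩

noncomputable def dec (W : WTA Γ M) (e'' : Edge (W.L × Option Γ) S W.C) : Edge W.L Γ W.C :=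
  ⟨e''.src.1, (e''.dst.2).getD (Classical.arbitrary Γ), e''.guard, e''.reset, e''.dst.1⟩

lemma dec_enc (W : WTA Γ M) (h : Γ → S) (o : Option Γ) (e : Edge W.L Γ W.C) :
    dec W (enc W h o e) = e := rfl

noncomputable def prodWTA (W : WTA Γ M) [Finite Γ] (h : Γ → S) : WTA S M where
  L := W.L × Option Γ
  C := W.C
  finL := by have := W.finL; infer_instance
  finC := W.finC
  I := {q | q.1 ∈ W.I ∧ q.2 = none}
  F := {q | q.1 ∈ W.F}
  E := (fun q : {e // e ∈ W.E} × Option Γ => enc W h q.2 q.1.1) '' Set.univ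
  finE := by have := W.finE.to_subtype; exact (Set.toFinite _).image _
  wtL := fun q => W.wtL q.1
  wtE := fun e'' =>
    match e''.dst.2 with
    | some γ => W.wtE ⟨e''.src.1, γ, e''.guard, e''.reset, e''.dst.1⟩
    | none => 0

noncomputable def dword (W : WTA Γ M) (w : List (S × ℝ≥0))
    (es'' : List (Edge (W.L × Option Γ) S W.C)) : List (Γ × ℝ≥0) :=
  List.zipWith (fun p e'' => ((e''.dst.2).getD (Classical.arbitrary Γ), p.2)) w es''

variable [Finite Γ]

lemma run_dec (W : WTA Γ M) (h : Γ → S) :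
    ∀ (w : List (S × ℝ≥0)) (es'' : List (Edge (W.L × Option Γ) S W.C))
      (q : W.L × Option Γ) (ν : ClockVal W.C),
      (prodWTA W h).toTimedAutomaton.IsRunFrom q ν w es'' →
      W.toTimedAutomaton.IsRunFrom q.1 ν (dword W w es'') (es''.map (dec W)) ∧
      (dword W w es'').map (fun p => (h p.1, p.2)) = w ∧
      (prodWTA W h).runWord w es'' = W.runWord (dword W w es'') (es''.map (dec W)) := by
  intro w
  induction w with
  | nil =>
      rintro (_ | ⟨e'', es''⟩) q ν hr
      · exact ⟨hr, rfl, rfl⟩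
      · exact absurd hr (by simp [TimedAutomaton.IsRunFrom])
  | cons p w ih =>
      obtain ⟨a, t⟩ := p
      rintro (_ | ⟨e'', es''⟩) q ν hr
      · exact absurd hr (by simp [TimedAutomaton.IsRunFrom])
      · obtain ⟨hE, hsrc, hlab, hg, hrest⟩ := hr
        obtain ⟨⟨eb, o⟩, -, hee⟩ := hE
        have hee' : enc W h o eb.1 = e'' := hee
        subst hee'
        obtain ⟨ih1, ih2, ih3⟩ := ih es'' (eb.1.dst, some eb.1.label) _ hrest
        refine ⟨⟨eb.2, ?_, rfl, hg, ih1⟩, ?_, ?_⟩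
        · exact congrArg Prod.fst hsrc
        · simp only [dword, List.zipWith_cons_cons, List.map_cons]
          exact congrArg₂ _ (by exact congrArg₂ Prod.mk hlab rfl) ih2
        · simp only [dword, List.zipWith_cons_cons, List.map_cons, WTA.runWord]
          exact congrArg₂ _ rfl ih3

lemma run_enc (W : WTA Γ M) (h : Γ → S) :
    ∀ (vl : List (Γ × ℝ≥0)) (es : List (Edge W.L Γ W.C)) (ℓ : W.L) (o : Option Γ)
      (ν : ClockVal W.C),
      W.toTimedAutomaton.IsRunFrom ℓ ν vl es →
      ∃ es'', (prodWTA W h).toTimedAutomaton.IsRunFrom (ℓ, o) ν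
          (vl.map (fun p => (h p.1, p.2))) es'' ∧
        es''.map (dec W) = es ∧ dword W (vl.map (fun p => (h p.1, p.2))) es'' = vl := by
  intro vl
  induction vl with
  | nil =>
      rintro (_ | ⟨e, es⟩) ℓ o ν hr
      · exact ⟨[], hr, rfl, rfl⟩
      · exact absurd hr (by simp [TimedAutomaton.IsRunFrom])
  | cons p vl ih =>
      obtain ⟨γ, t⟩ := p
      rintro (_ | ⟨e, es⟩) ℓ o ν hr
      · exact absurd hr (by simp [TimedAutomaton.IsRunFrom])
      · obtain ⟨hE, hsrc, hlab, hg, hrest⟩ := hr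
        obtain ⟨es'', ih1, ih2, ih3⟩ := ih es e.dst (some e.label) _ hrest
        refine ⟨enc W h o e :: es'', ⟨⟨⟨⟨e, hE⟩, o⟩, trivial, rfl⟩, ?_, ?_, hg, ih1⟩, ?_, ?_⟩
        · show (e.src, o) = (ℓ, o)
          rw [hsrc]
        · show h e.label = h γ
          rw [hlab]
        · exact congrArg₂ List.cons rfl ih2
        · simp only [List.map_cons, dword, List.zipWith_cons_cons]
          exact congrArg₂ _ (by simp [enc, hlab]) ih3

lemma dec_inj (W : WTA Γ M) (h : Γ → S) :
    ∀ (w : List (S × ℝ≥0)) (es₁ es₂ : List (Edge (W.L × Option Γ) S W.C))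
      (q : W.L × Option Γ) (ν : ClockVal W.C),
      (prodWTA W h).toTimedAutomaton.IsRunFrom q ν w es₁ →
      (prodWTA W h).toTimedAutomaton.IsRunFrom q ν w es₂ →
      es₁.map (dec W) = es₂.map (dec W) → es₁ = es₂ := by
  intro w
  induction w with
  | nil =>
      rintro (_ | ⟨e₁, es₁⟩) (_ | ⟨e₂, es₂⟩) q ν h₁ h₂ hd
      · rfl
      · exact absurd h₂ (by simp [TimedAutomaton.IsRunFrom])
      · exact absurd h₁ (by simp [TimedAutomaton.IsRunFrom])
      · exact absurd h₁ (by simp [TimedAutomaton.IsRunFrom])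
  | cons p w ih =>
      obtain ⟨a, t⟩ := p
      rintro (_ | ⟨e₁, es₁⟩) (_ | ⟨e₂, es₂⟩) q ν h₁ h₂ hd
      · rfl
      · exact absurd h₁ (by simp [TimedAutomaton.IsRunFrom])
      · exact absurd h₂ (by simp [TimedAutomaton.IsRunFrom])
      · obtain ⟨hE₁, hsrc₁, -, -, hrest₁⟩ := h₁
        obtain ⟨hE₂, hsrc₂, -, -, hrest₂⟩ := h₂
        simp only [List.map_cons, List.cons.injEq] at hd
        obtain ⟨hdh, hdt⟩ := hd
        obtain ⟨⟨eb₁, o₁⟩, -, hee₁⟩ := hE₁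
        have hee₁' : enc W h o₁ eb₁.1 = e₁ := hee₁
        subst hee₁'
        obtain ⟨⟨eb₂, o₂⟩, -, hee₂⟩ := hE₂
        have hee₂' : enc W h o₂ eb₂.1 = e₂ := hee₂
        subst hee₂'
        have heb : eb₁.1 = eb₂.1 := by rw [← dec_enc W h o₁ eb₁.1, ← dec_enc W h o₂ eb₂.1, hdh]
        have ho : o₁ = o₂ := by
          have h1 : (eb₁.1.src, o₁) = q := hsrc₁
          have h2 : (eb₂.1.src, o₂) = q := hsrc₂
          rw [← h2] at h1
          exact congrArg Prod.snd h1
        have he : enc W h o₁ eb₁.1 = enc W h o₂ eb₂.1 := by rw [heb, ho]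
        rw [he]
        refine congrArg _ ?_
        rw [heb] at hrest₁
        exact ih es₁ es₂ _ _ hrest₁ hrest₂ hdt

end Dir1

namespace Dir1
open Set

lemma dir1 {S M : Type} [Finite S] [Nonempty S] [AddCommMonoid M]
    (val : List ((M × M) × ℝ≥0) → M) (𝕃 : TimedWord S → M)
    (hmem : HMem val (fun {_} T => T.Sequential) 𝕃) : QTLRecognizable val 𝕃 := by
  obtain ⟨Γ, finΓ, neΓ, h, r, ⟨W, hseq, hWr⟩, h𝕃⟩ := hmem
  refine ⟨prodWTA W h, fun w => ?_⟩
  rw [h𝕃 w]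
  set Φ : List (Edge (W.L × Option Γ) S W.C) →
      TimedWord Γ × List (Edge W.L Γ W.C) :=
    fun es'' => if hv : dword W w.1 es'' = [] then (⟨[(Classical.arbitrary Γ, 0)], by simp⟩, [])
      else (⟨dword W w.1 es'', hv⟩, es''.map (dec W)) with hΦ
  have hvne : ∀ es'' ∈ (prodWTA W h).toTimedAutomaton.RunOn w, dword W w.1 es'' ≠ [] := by
    rintro es'' ⟨q₀, hq₀, hrun⟩ hcon
    have hlen := (run_spec _ _ _ _ _ hrun).1
    have h2 : (List.zipWith
        (fun (p : S × ℝ≥0) (e'' : Edge (W.L × Option Γ) S W.C) =>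
          ((e''.dst.2).getD (Classical.arbitrary Γ), p.2)) w.1 es'').length = 0 :=
      congrArg List.length hcon
    have h3 : min w.1.length es''.length = 0 := List.length_zipWith.symm.trans h2
    rw [← hlen, min_self] at h3
    rw [hlen] at h3
    exact w.2 (List.length_eq_zero_iff.mp h3)
  have key := sum_push h w ((prodWTA W h).toTimedAutomaton.RunOn w)
      (fun v => W.toTimedAutomaton.RunOn v) (runOn_finite _ w)
      (fun v => runOn_finite _ v) Φ
      ?_ (fun es'' => val ((prodWTA W h).runWord w.1 es''))
      (fun v es => val (W.runWord v.1 es)) ?_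
  · exact key.trans (finsum_mem_congr rfl (fun v _ => hWr v))
  · -- BijOn
    refine ⟨?_, ?_, ?_⟩
    · -- MapsTo
      rintro es'' ⟨q₀, hq₀, hrun⟩
      have hv := hvne es'' ⟨q₀, hq₀, hrun⟩
      obtain ⟨hd1, hd2, hd3⟩ := run_dec W h w.1 es'' q₀ _ hrun
      simp only [hΦ, dif_neg hv]
      exact ⟨Subtype.ext hd2, ⟨q₀.1, hq₀.1, hd1⟩⟩
    · -- InjOn
      rintro es₁ h₁ es₂ h₂ heq
      simp only [hΦ, dif_neg (hvne es₁ h₁), dif_neg (hvne es₂ h₂)] at heq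
      have hd : es₁.map (dec W) = es₂.map (dec W) := congrArg Prod.snd heq
      obtain ⟨q₁, hq₁, hrun₁⟩ := h₁
      obtain ⟨q₂, hq₂, hrun₂⟩ := h₂
      have hq : q₁ = q₂ := by
        rcases w with ⟨_ | ⟨⟨a, t⟩, w'⟩, hw⟩
        · exact absurd rfl hw
        · rcases es₁ with _ | ⟨e₁, es₁'⟩
          · exact absurd hrun₁ (by simp [TimedAutomaton.IsRunFrom])
          · rcases es₂ with _ | ⟨e₂, es₂'⟩
            · exact absurd hrun₂ (by simp [TimedAutomaton.IsRunFrom])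
            · obtain ⟨hE₁, hsrc₁, -⟩ := hrun₁
              obtain ⟨hE₂, hsrc₂, -⟩ := hrun₂
              replace hd := List.cons.inj hd
              have h1 : e₁.src.1 = e₂.src.1 := congrArg Edge.src hd.1
              obtain ⟨⟨eb₁, o₁⟩, -, hee₁⟩ := hE₁
              have hee₁' : enc W h o₁ eb₁.1 = e₁ := hee₁
              subst hee₁'
              obtain ⟨⟨eb₂, o₂⟩, -, hee₂⟩ := hE₂
              have hee₂' : enc W h o₂ eb₂.1 = e₂ := hee₂
              subst hee₂'
              rw [← hsrc₁, ← hsrc₂]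
              have h2 : o₁ = none := by
                have := hq₁.2
                rw [← hsrc₁] at this
                exact this
              have h3 : o₂ = none := by
                have := hq₂.2
                rw [← hsrc₂] at this
                exact this
              have h1' : eb₁.1.src = eb₂.1.src := h1
              show (eb₁.1.src, o₁) = (eb₂.1.src, o₂)
              rw [h1', h2, h3]
      subst hq
      exact dec_inj W h w.1 es₁ es₂ q₁ _ hrun₁ hrun₂ hd
    · -- SurjOn
      rintro ⟨v, es⟩ ⟨hv, hes⟩
      obtain ⟨ℓ₀, hI, hrun⟩ := hes
      obtain ⟨es'', he1, he2, he3⟩ := run_enc W h v.1 es ℓ₀ none _ hrun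
      have hv1 : v.1.map (fun p => (h p.1, p.2)) = w.1 := congrArg Subtype.val hv
      rw [hv1] at he1 he3
      refine ⟨es'', ⟨(ℓ₀, none), ⟨hI, rfl⟩, he1⟩, ?_⟩
      simp only [hΦ, dif_neg (he3 ▸ v.2)]
      exact Prod.ext (Subtype.ext he3) he2
  · -- hFG
    rintro es'' ⟨q₀, hq₀, hrun⟩
    have hv := hvne es'' ⟨q₀, hq₀, hrun⟩
    simp only [hΦ, dif_neg hv]
    exact congrArg val (run_dec W h w.1 es'' q₀ _ hrun).2.2

end Dir1


/-- If `𝕄` is a location-independent timed valuation monoid, then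
`H^Seq(Σ,𝕄) = Rec(Σ,𝕄)`. -/
theorem hmem_seq_eq_rec_of_locIndep {S M : Type} [Finite S] [Nonempty S]
    [AddCommMonoid M] (val : List ((M × M) × ℝ≥0) → M) (hli : LocIndep val) :
    ∀ 𝕃 : TimedWord S → M,
      HMem val (fun {_} T => T.Sequential) 𝕃 ↔ QTLRecognizable val 𝕃 :=
  fun 𝕃 => ⟨Dir1.dir1 val 𝕃, Dir2.dir2 val hli 𝕃⟩
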